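/- A set S ⊆ ℕ^ℕ is Δ⁰₂ if and only if there exists T ⊆ ℕ^ℕ such that S = T \ [T_∞]. -/

import Mathlib

open Ordinal Filter Topology

/-- The first `n` values of `f` as a finite sequence. -/
def seg (f : ℕ → ℕ) (n : ℕ) : List ℕ := (List.range n).map f

/-- `[X]`: the set of infinite sequences all of whose initial segments lie in `X`. -/
def ext (X : Set (List ℕ)) : Set (ℕ → ℕ) := {f | ∀ n, seg f n ∈ X}

/-- `σ` is an initial segment of `f`. -/
def isInit (σ : List ℕ) (f : ℕ → ℕ) : Prop := seg f σ.length = σ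

/-- One step of the derivative process relative to `S`. -/
def derivStep (S : Set (ℕ → ℕ)) (X : Set (List ℕ)) : Set (List ℕ) :=
  {x ∈ X | ∃ f g : ℕ → ℕ, f ∈ ext X ∧ g ∈ ext X ∧ isInit x f ∧ isInit x g ∧ f ∈ S ∧ g ∉ S}

/-- The transfinite sequence `S_α`. -/
noncomputable def dSeq (S : Set (ℕ → ℕ)) (α : Ordinal.{0}) : Set (List ℕ) :=
  Ordinal.limitRecOn α Set.univ (fun _ X => derivStep S X)
    (fun o _ ih => ⋂ (β : Set.Iio o), ih β.1 β.2)

/-- `α(S)`: the least ordinal where the process stabilizes. -/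
noncomputable def kernelOrd (S : Set (ℕ → ℕ)) : Ordinal.{0} :=
  sInf {α | dSeq S α = dSeq S (α + 1)}

/-- `S_∞`, the kernel. -/
noncomputable def kernel (S : Set (ℕ → ℕ)) : Set (List ℕ) := dSeq S (kernelOrd S)

/-- `β(σ)`: the least ordinal `α` with `σ ∉ S_α`. -/
noncomputable def bOrd (S : Set (ℕ → ℕ)) (σ : List ℕ) : Ordinal.{0} :=
  sInf {α | σ ∉ dSeq S α}

open Classical in
/-- `S` is guessable. -/
def Guessable (S : Set (ℕ → ℕ)) : Prop :=
  ∃ G : List ℕ → ℕ, ∀ f : ℕ → ℕ,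
    Tendsto (fun n => G (seg f n)) atTop (𝓝 (if f ∈ S then 1 else 0))

/-- `Δ⁰₂`: both a countable union of closed sets and a countable intersection of open sets. -/
def IsDelta02 (S : Set (ℕ → ℕ)) : Prop :=
  (∃ F : ℕ → Set (ℕ → ℕ), (∀ n, IsClosed (F n)) ∧ S = ⋃ n, F n) ∧
  (∃ U : ℕ → Set (ℕ → ℕ), (∀ n, IsOpen (U n)) ∧ S = ⋂ n, U n)



/- ## seg lemmas -/

lemma seg_length (f : ℕ → ℕ) (n : ℕ) : (seg f n).length = n := by
  simp [seg]

lemma seg_take (f : ℕ → ℕ) {m n : ℕ} (h : m ≤ n) : (seg f n).take m = seg f m := by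
  simp [seg, ← List.map_take, List.take_range, Nat.min_eq_left h]

lemma isInit_seg (f : ℕ → ℕ) (n : ℕ) : isInit (seg f n) f := by
  simp [isInit, seg_length]

lemma seg_eq_iff {f g : ℕ → ℕ} {n : ℕ} : seg f n = seg g n ↔ ∀ i < n, f i = g i := by
  constructor
  · intro h i hi
    have h1 : (seg f n)[i]? = some (f i) := by
      simp [seg, List.getElem?_map, List.getElem?_range hi]
    have h2 : (seg g n)[i]? = some (g i) := by
      simp [seg, List.getElem?_map, List.getElem?_range hi]
    rw [h, h2] at h1
    exact (Option.some_injective _ h1).symm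
  · intro h
    apply List.ext_getElem (by simp [seg_length])
    intro i h1 h2
    have hi : i < n := by simpa [seg_length] using h1
    simpa [seg, List.getElem_map, List.getElem_range] using h i hi

lemma isInit_of_seg_eq {f g : ℕ → ℕ} {n : ℕ} (h : isInit (seg f n) g) : seg g n = seg f n := by
  rwa [isInit, seg_length] at h

/- ## dSeq lemmas -/

lemma dSeq_zero (S : Set (ℕ → ℕ)) : dSeq S 0 = Set.univ :=
  Ordinal.limitRecOn_zero _ _ _

lemma dSeq_succ (S : Set (ℕ → ℕ)) (α : Ordinal.{0}) :
    dSeq S (α + 1) = derivStep S (dSeq S α) := by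
  rw [dSeq, Ordinal.add_one_eq_succ, Ordinal.limitRecOn_succ]
  rfl

lemma dSeq_limit (S : Set (ℕ → ℕ)) {o : Ordinal.{0}} (h : Order.IsSuccLimit o) :
    dSeq S o = ⋂ (β : Set.Iio o), dSeq S β.1 := by
  rw [dSeq, Ordinal.limitRecOn_limit _ _ _ _ h]
  rfl

lemma derivStep_subset (S : Set (ℕ → ℕ)) (X : Set (List ℕ)) : derivStep S X ⊆ X :=
  fun _ hx => hx.1

lemma dSeq_antitone (S : Set (ℕ → ℕ)) : ∀ {α β : Ordinal.{0}}, α ≤ β → dSeq S β ⊆ dSeq S α := by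
  have key : ∀ β : Ordinal.{0}, ∀ α ≤ β, dSeq S β ⊆ dSeq S α := by
    intro β
    induction β using Ordinal.induction with
    | h β ih =>
      rcases Ordinal.zero_or_succ_or_isSuccLimit β with h0 | ⟨γ, hγ⟩ | hl
      · subst h0; intro α hα
        rw [nonpos_iff_eq_zero.1 hα]
      · subst hγ
        intro α hα
        rcases eq_or_lt_of_le hα with rfl | hlt
        · exact subset_rfl
        · have hαγ : α ≤ γ := Order.lt_succ_iff.1 hlt
          rw [← Ordinal.add_one_eq_succ, dSeq_succ]
          exact (derivStep_subset S _).trans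
            (ih γ (by exact Order.lt_succ γ) α hαγ)
      · intro α hα
        rcases eq_or_lt_of_le hα with rfl | hlt
        · exact subset_rfl
        · rw [dSeq_limit S hl]
          exact Set.iInter_subset (fun (β : Set.Iio _) => dSeq S β.1) ⟨α, hlt⟩
  intro α β h
  exact key β α h

/- ## kernel lemmas -/

lemma fixedSet_nonempty (S : Set (ℕ → ℕ)) : {α : Ordinal.{0} | dSeq S α = dSeq S (α + 1)}.Nonempty := by
  by_contra h
  simp only [Set.not_nonempty_iff_eq_empty, Set.eq_empty_iff_forall_notMem, Set.mem_setOf_eq] at h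
  have hinj : Function.Injective (dSeq S) := by
    intro α β hαβ
    by_contra hne'
    wlog hlt : α < β generalizing α β
    · exact this hαβ.symm (Ne.symm hne') ((lt_or_gt_of_ne hne').resolve_left hlt)
    have h1 : dSeq S β ⊆ dSeq S (α + 1) := dSeq_antitone S (by rwa [Ordinal.add_one_eq_succ, Order.succ_le_iff])
    have h2 : dSeq S (α + 1) ⊆ dSeq S α := dSeq_antitone S (by rw [Ordinal.add_one_eq_succ]; exact le_of_lt (Order.lt_succ α))
    exact h α (subset_antisymm (by rw [hαβ]; exact h1) h2)
  exact not_small_ordinal.{0} (small_of_injective hinj)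

lemma kernelOrd_mem (S : Set (ℕ → ℕ)) : dSeq S (kernelOrd S) = dSeq S (kernelOrd S + 1) :=
  csInf_mem (fixedSet_nonempty S)

lemma kernel_fixed (S : Set (ℕ → ℕ)) : derivStep S (kernel S) = kernel S := by
  rw [kernel, ← dSeq_succ, ← kernelOrd_mem]

lemma dSeq_eq_kernel_of_ge (S : Set (ℕ → ℕ)) : ∀ α, kernelOrd S ≤ α → dSeq S α = kernel S := by
  intro α
  induction α using Ordinal.induction with
  | h α ih =>
    intro hα
    rcases eq_or_lt_of_le hα with rfl | hlt
    · rfl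
    rcases Ordinal.zero_or_succ_or_isSuccLimit α with h0 | ⟨γ, hγ⟩ | hl
    · subst h0; exact absurd hlt (by simp)
    · subst hγ
      have hγk : kernelOrd S ≤ γ := Order.lt_succ_iff.1 hlt
      rw [← Ordinal.add_one_eq_succ, dSeq_succ, ih γ (by exact Order.lt_succ γ) hγk]
      exact kernel_fixed S
    · rw [dSeq_limit S hl]
      apply subset_antisymm
      · exact Set.iInter_subset (fun (β : Set.Iio α) => dSeq S β.1) ⟨kernelOrd S, hlt⟩
      · apply Set.subset_iInter
        intro ⟨β, hβ⟩
        rcases le_total β (kernelOrd S) with hc | hc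
        · exact dSeq_antitone S hc
        · rw [ih β hβ hc]

lemma kernel_subset_dSeq (S : Set (ℕ → ℕ)) (α : Ordinal.{0}) : kernel S ⊆ dSeq S α := by
  rcases le_total α (kernelOrd S) with hc | hc
  · exact dSeq_antitone S hc
  · rw [dSeq_eq_kernel_of_ge S α hc]

/- ## bOrd lemmas -/

lemma bOrdSet_nonempty {S : Set (ℕ → ℕ)} {σ : List ℕ} (h : σ ∉ kernel S) :
    {α : Ordinal.{0} | σ ∉ dSeq S α}.Nonempty := ⟨kernelOrd S, h⟩

lemma bOrd_not_mem {S : Set (ℕ → ℕ)} {σ : List ℕ} (h : σ ∉ kernel S) : σ ∉ dSeq S (bOrd S σ) :=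
  csInf_mem (bOrdSet_nonempty h)

lemma mem_of_lt_bOrd {S : Set (ℕ → ℕ)} {σ : List ℕ} {α : Ordinal.{0}} (h : α < bOrd S σ) :
    σ ∈ dSeq S α := by
  by_contra hc
  have h1 : bOrd S σ ≤ α := csInf_le (OrderBot.bddBelow _) (show α ∈ {α | σ ∉ dSeq S α} from hc)
  exact absurd h1 (not_le.2 h)

lemma bOrd_is_succ {S : Set (ℕ → ℕ)} {σ : List ℕ} (h : σ ∉ kernel S) :
    ∃ γ : Ordinal.{0}, bOrd S σ = γ + 1 := by
  rcases Ordinal.zero_or_succ_or_isSuccLimit (bOrd S σ) with h0 | ⟨γ, hγ⟩ | hl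
  · exact absurd (bOrd_not_mem h) (by rw [h0, dSeq_zero]; exact fun hx => hx (Set.mem_univ σ))
  · exact ⟨γ, by rw [← hγ, Ordinal.add_one_eq_succ]⟩
  · exfalso
    have h1 := bOrd_not_mem h
    rw [dSeq_limit S hl] at h1
    rw [Set.mem_iInter] at h1
    push_neg at h1
    obtain ⟨⟨β, hβ⟩, h2⟩ := h1
    have h3 : bOrd S σ ≤ β := csInf_le (OrderBot.bddBelow _) (show β ∈ {α | σ ∉ dSeq S α} from h2)
    exact absurd h3 (not_le.2 hβ)


/- ## the guessing function -/

def prefSet (T : Set (ℕ → ℕ)) (σ : List ℕ) : Set Ordinal.{0} :=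
  {o | ∃ m, m ≤ σ.length ∧ σ.take m ∉ kernel T ∧ bOrd T (σ.take m) = o}

lemma prefSet_nonempty {T : Set (ℕ → ℕ)} {σ : List ℕ}
    (h : ∃ m, m ≤ σ.length ∧ σ.take m ∉ kernel T) : (prefSet T σ).Nonempty := by
  obtain ⟨m, hm, hk⟩ := h
  exact ⟨bOrd T (σ.take m), m, hm, hk, rfl⟩

lemma exists_min_pref {T : Set (ℕ → ℕ)} {σ : List ℕ}
    (h : ∃ m, m ≤ σ.length ∧ σ.take m ∉ kernel T) :
    ∃ m, m ≤ σ.length ∧ σ.take m ∉ kernel T ∧ bOrd T (σ.take m) = sInf (prefSet T σ) :=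
  csInf_mem (prefSet_nonempty h)

open Classical in
noncomputable def guess (T : Set (ℕ → ℕ)) (σ : List ℕ) : ℕ :=
  if h : ∃ m, m ≤ σ.length ∧ σ.take m ∉ kernel T then
    if ∃ (γ : Ordinal.{0}) (g : ℕ → ℕ), bOrd T (σ.take (Nat.find (exists_min_pref h))) = γ + 1 ∧
        g ∈ ext (dSeq T γ) ∧ isInit (σ.take (Nat.find (exists_min_pref h))) g ∧ g ∈ T then 1 else 0
  else 0

theorem guessable_diff (T : Set (ℕ → ℕ)) : Guessable (T \ ext (kernel T)) := by
  classical
  refine ⟨guess T, fun f => ?_⟩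
  by_cases hf : f ∈ ext (kernel T)
  · have hf' : f ∉ T \ ext (kernel T) := fun h => h.2 hf
    rw [if_neg hf']
    have hz : ∀ n, guess T (seg f n) = 0 := by
      intro n
      unfold guess
      rw [dif_neg]
      rintro ⟨m, hm, hk⟩
      rw [seg_length] at hm
      rw [seg_take f hm] at hk
      exact hk (hf m)
    simp only [hz]
    exact tendsto_const_nhds
  · have hfe : ∃ n, seg f n ∉ kernel T := by
      by_contra hc
      push_neg at hc
      exact hf hc
    set P : Set Ordinal.{0} := {o | ∃ m, seg f m ∉ kernel T ∧ bOrd T (seg f m) = o} with hP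
    have hPne : P.Nonempty := by
      obtain ⟨n₁, hn₁⟩ := hfe
      exact ⟨bOrd T (seg f n₁), n₁, hn₁, rfl⟩
    set β : Ordinal.{0} := sInf P with hβ
    obtain ⟨mstar, hms_k, hms_b⟩ := csInf_mem hPne
    have hR : ∃ m, seg f m ∉ kernel T ∧ bOrd T (seg f m) = β := ⟨mstar, hms_k, hms_b⟩
    set m₀ := Nat.find hR with hm₀
    obtain ⟨hm₀k, hm₀b⟩ := Nat.find_spec hR
    have hm₀le : m₀ ≤ mstar := Nat.find_min' hR ⟨hms_k, hms_b⟩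
    obtain ⟨γ, hγ⟩ := bOrd_is_succ hm₀k
    have hγβ : γ < β := by
      rw [← hm₀b, hγ, Ordinal.add_one_eq_succ]
      exact Order.lt_succ γ
    have hfγ : f ∈ ext (dSeq T γ) := by
      intro m
      by_cases hk : seg f m ∈ kernel T
      · exact kernel_subset_dSeq T γ hk
      · apply mem_of_lt_bOrd
        have h1 : β ≤ bOrd T (seg f m) := csInf_le (OrderBot.bddBelow _) ⟨m, hk, rfl⟩
        exact lt_of_lt_of_le hγβ h1
    have hτγ : seg f m₀ ∈ dSeq T γ := mem_of_lt_bOrd (by rw [hγ, Ordinal.add_one_eq_succ]; exact Order.lt_succ γ)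
    have hτnot : seg f m₀ ∉ dSeq T (γ + 1) := by rw [← hγ]; exact bOrd_not_mem hm₀k
    have hev : ∀ n, mstar ≤ n → guess T (seg f n) = (if f ∈ T then 1 else 0) := by
      intro n hn
      have hh : ∃ m, m ≤ (seg f n).length ∧ (seg f n).take m ∉ kernel T :=
        ⟨mstar, by rw [seg_length]; exact hn, by rw [seg_take f hn]; exact hms_k⟩
      unfold guess
      rw [dif_pos hh]
      have hsinf : sInf (prefSet T (seg f n)) = β := by
        apply le_antisymm
        · exact csInf_le (OrderBot.bddBelow _)
            ⟨mstar, by rw [seg_length]; exact hn, by rw [seg_take f hn]; exact hms_k,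
              by rw [seg_take f hn]; exact hms_b⟩
        · apply le_csInf (prefSet_nonempty hh)
          rintro o ⟨m, hm, hk, hb⟩
          rw [seg_length] at hm
          rw [seg_take f hm] at hk hb
          exact hb ▸ csInf_le (OrderBot.bddBelow _) ⟨m, hk, rfl⟩
      have hm₀n : m₀ ≤ n := hm₀le.trans hn
      have hfind : Nat.find (exists_min_pref hh) = m₀ := by
        rw [Nat.find_eq_iff]
        constructor
        · exact ⟨by rw [seg_length]; exact hm₀n, by rw [seg_take f hm₀n]; exact hm₀k,
            by rw [seg_take f hm₀n, hsinf]; exact hm₀b⟩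
        · intro k hk hkk
          obtain ⟨hk1, hk2, hk3⟩ := hkk
          rw [seg_length] at hk1
          rw [seg_take f hk1] at hk2 hk3
          rw [hsinf] at hk3
          exact Nat.find_min hR hk ⟨hk2, hk3⟩
      rw [hfind, seg_take f hm₀n]
      by_cases hfT : f ∈ T
      · rw [if_pos hfT, if_pos]
        exact ⟨γ, f, hγ, hfγ, isInit_seg f m₀, hfT⟩
      · rw [if_neg hfT, if_neg]
        rintro ⟨γ', g, hγ', hg1, hg2, hg3⟩
        have hγγ' : γ' = γ := by
          have h1 : γ' + 1 = γ + 1 := hγ'.symm.trans hγ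
          rw [Ordinal.add_one_eq_succ, Ordinal.add_one_eq_succ] at h1
          exact Order.succ_eq_succ_iff.1 h1
        subst hγγ'
        apply hτnot
        rw [dSeq_succ]
        exact ⟨hτγ, g, f, hg1, hfγ, hg2, isInit_seg f m₀, hg3, hfT⟩
    refine Tendsto.congr' (eventually_atTop.2 ⟨mstar, fun n hn => ?_⟩) tendsto_const_nhds
    show @ite ℕ (f ∈ T \ ext (kernel T)) (Classical.propDecidable _) 1 0 = guess T (seg f n)
    rw [hev n hn]
    by_cases hfT : f ∈ T
    · rw [if_pos hfT, if_pos ⟨hfT, hf⟩]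
    · rw [if_neg hfT, if_neg (fun h => hfT h.1)]

/- ## Guessable implies Delta02 -/


lemma isOpen_of_determined {A : Set (ℕ → ℕ)} {n : ℕ}
    (h : ∀ f g : ℕ → ℕ, (∀ i < n, f i = g i) → f ∈ A → g ∈ A) : IsOpen A := by
  rw [isOpen_iff_mem_nhds]
  intro f hf
  have h1 : ∀ i : ℕ, {g : ℕ → ℕ | g i = f i} ∈ 𝓝 f :=
    fun i => (continuous_apply i).continuousAt.preimage_mem_nhds
      ((isOpen_discrete {f i}).mem_nhds rfl)
  have h2 : (⋂ i ∈ Finset.range n, {g : ℕ → ℕ | g i = f i}) ∈ 𝓝 f :=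
    (Filter.biInter_finset_mem _).2 fun i _ => h1 i
  refine Filter.mem_of_superset h2 ?_
  intro g hg
  simp only [Set.mem_iInter] at hg
  exact h f g (fun i hi => (hg i (Finset.mem_range.2 hi)).symm) hf

lemma isClopen_of_determined {A : Set (ℕ → ℕ)} {n : ℕ}
    (h : ∀ f g : ℕ → ℕ, (∀ i < n, f i = g i) → (f ∈ A ↔ g ∈ A)) : IsClosed A ∧ IsOpen A :=
  ⟨⟨isOpen_of_determined fun f g hfg hf hg => hf ((h f g hfg).2 hg)⟩,
    isOpen_of_determined fun f g hfg hf => (h f g hfg).1 hf⟩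

lemma guessable_isDelta02 {S : Set (ℕ → ℕ)} (h : Guessable S) : IsDelta02 S := by
  classical
  obtain ⟨G, hG⟩ := h
  have hev1 : ∀ f ∈ S, ∀ᶠ n in atTop, G (seg f n) = 1 := by
    intro f hf
    have := hG f
    rw [if_pos hf, nhds_discrete, Filter.tendsto_pure] at this
    exact this
  have hev0 : ∀ f ∉ S, ∀ᶠ n in atTop, G (seg f n) = 0 := by
    intro f hf
    have := hG f
    rw [if_neg hf, nhds_discrete, Filter.tendsto_pure] at this
    exact this
  have hdet : ∀ (m c : ℕ) (N : ℕ), IsClosed {f : ℕ → ℕ | N ≤ m → G (seg f m) = c} ∧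
      IsOpen {f : ℕ → ℕ | N ≤ m → G (seg f m) = c} := by
    intro m c N
    apply isClopen_of_determined (n := m)
    intro f g hfg
    simp only [Set.mem_setOf_eq, seg_eq_iff.2 hfg]
  have hmemC : ∀ (c : ℕ) (f : ℕ → ℕ),
      (f ∈ ⋃ N, ⋂ m, {f : ℕ → ℕ | N ≤ m → G (seg f m) = c}) ↔ ∀ᶠ n in atTop, G (seg f n) = c := by
    intro c f
    simp only [Set.mem_iUnion, Set.mem_iInter, Set.mem_setOf_eq, eventually_atTop]
  constructor
  · refine ⟨fun N => ⋂ m, {f : ℕ → ℕ | N ≤ m → G (seg f m) = 1},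
      fun N => isClosed_iInter fun m => (hdet m 1 N).1, ?_⟩
    ext f
    rw [hmemC 1 f]
    constructor
    · exact fun hf => hev1 f hf
    · intro hf
      by_contra hfS
      obtain ⟨N, hN⟩ := eventually_atTop.1 hf
      obtain ⟨M, hM⟩ := eventually_atTop.1 (hev0 f hfS)
      have := (hN (max N M) (le_max_left _ _)).symm.trans (hM (max N M) (le_max_right _ _))
      exact absurd this one_ne_zero
  · refine ⟨fun N => (⋂ m, {f : ℕ → ℕ | N ≤ m → G (seg f m) = 0})ᶜ,
      fun N => (isClosed_iInter fun m => (hdet m 0 N).1).isOpen_compl, ?_⟩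
    ext f
    rw [← Set.compl_iUnion, Set.mem_compl_iff, hmemC 0 f]
    constructor
    · intro hf hf0
      obtain ⟨N, hN⟩ := eventually_atTop.1 hf0
      obtain ⟨M, hM⟩ := eventually_atTop.1 (hev1 f hf)
      have := (hN (max N M) (le_max_left _ _)).symm.trans (hM (max N M) (le_max_right _ _))
      exact absurd this zero_ne_one
    · intro hf
      by_contra hfS
      exact hf (hev0 f hfS)

/- ## Delta02 implies empty kernel intersection -/

lemma isClosed_ext (X : Set (List ℕ)) : IsClosed (ext X) := by
  have : ext X = ⋂ n, {f : ℕ → ℕ | seg f n ∈ X} := by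
    ext f; simp [ext]
  rw [this]
  refine isClosed_iInter fun n => ?_
  have h := isClopen_of_determined (A := {f : ℕ → ℕ | seg f n ∈ X}) (n := n) ?_
  · exact h.1
  · intro f g hfg
    simp only [Set.mem_setOf_eq, seg_eq_iff.2 hfg]

lemma dense_of_approx {X : Set (ℕ → ℕ)} (A : Set (ℕ → ℕ))
    (h : ∀ f ∈ X, ∀ n : ℕ, ∃ g ∈ X ∩ A, ∀ i < n, g i = f i) :
    Dense (Subtype.val ⁻¹' A : Set ↥X) := by
  rw [dense_iff_inter_open]
  rintro U hU hUne
  obtain ⟨x, hx⟩ := hUne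
  obtain ⟨U', hU'o, hU'eq⟩ := isOpen_induced_iff.1 hU
  have hxU' : (x : ℕ → ℕ) ∈ U' := by rw [← hU'eq] at hx; exact hx
  have hU'n : U' ∈ 𝓝 (x : ℕ → ℕ) := hU'o.mem_nhds hxU'
  rw [nhds_pi, Filter.mem_pi] at hU'n
  obtain ⟨I, hIfin, t, ht, htU⟩ := hU'n
  obtain ⟨n, hn⟩ : ∃ n, ∀ i ∈ I, i < n := by
    obtain ⟨b, hb⟩ := hIfin.bddAbove
    exact ⟨b + 1, fun i hi => Nat.lt_succ_of_le (hb hi)⟩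
  obtain ⟨g, ⟨hgX, hgA⟩, hgf⟩ := h x x.2 n
  have hgU' : g ∈ U' := by
    apply htU
    intro i hi
    rw [hgf i (hn i hi)]
    exact mem_of_mem_nhds (ht i)
  exact ⟨⟨g, hgX⟩, by rw [← hU'eq]; exact hgU', hgA⟩

lemma delta02_kernel_inter_empty {S : Set (ℕ → ℕ)} (h : IsDelta02 S) :
    S ∩ ext (kernel S) = ∅ := by
  by_contra hc
  obtain ⟨f₀, hf₀S, hf₀X⟩ := Set.nonempty_iff_ne_empty.2 hc
  set X := ext (kernel S) with hX
  have hXc : IsClosed X := isClosed_ext _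
  haveI : PolishSpace ↥X := hXc.polishSpace
  haveI : BaireSpace ↥X := by
    letI m := TopologicalSpace.upgradeIsCompletelyMetrizable ↥X
    exact BaireSpace.of_completelyPseudoMetrizable
  have happrox : ∀ (A : Set (ℕ → ℕ)),
      (∀ σ ∈ kernel S, ∃ g ∈ ext (kernel S) ∩ A, isInit σ g) →
      ∀ f ∈ X, ∀ n : ℕ, ∃ g ∈ X ∩ A, ∀ i < n, g i = f i := by
    intro A hA f hf n
    obtain ⟨g, hg, hginit⟩ := hA (seg f n) (hf n)
    refine ⟨g, hg, fun i hi => ?_⟩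
    have := isInit_of_seg_eq hginit
    exact seg_eq_iff.1 this i hi
  have hdS : Dense (Subtype.val ⁻¹' S : Set ↥X) := by
    apply dense_of_approx
    apply happrox
    intro σ hσ
    rw [← kernel_fixed S] at hσ
    obtain ⟨-, f', g', hf'e, hg'e, hf'i, hg'i, hf'S, hg'S⟩ := hσ
    exact ⟨f', ⟨hf'e, hf'S⟩, hf'i⟩
  have hdSc : Dense (Subtype.val ⁻¹' Sᶜ : Set ↥X) := by
    apply dense_of_approx
    apply happrox
    intro σ hσ
    rw [← kernel_fixed S] at hσ
    obtain ⟨-, f', g', hf'e, hg'e, hf'i, hg'i, hf'S, hg'S⟩ := hσ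
    exact ⟨g', ⟨hg'e, hg'S⟩, hg'i⟩
  obtain ⟨⟨F, hFc, hFeq⟩, ⟨U, hUo, hUeq⟩⟩ := h
  set V : ℕ ⊕ ℕ → Set ↥X := Sum.elim (fun n => Subtype.val ⁻¹' (U n))
    (fun n => Subtype.val ⁻¹' (F n)ᶜ) with hV
  have hVo : ∀ i, IsOpen (V i) := by
    rintro (n | n)
    · exact (hUo n).preimage continuous_subtype_val
    · exact (hFc n).isOpen_compl.preimage continuous_subtype_val
  have hVd : ∀ i, Dense (V i) := by
    rintro (n | n)
    · refine hdS.mono (Set.preimage_mono ?_)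
      rw [hUeq]; exact Set.iInter_subset U n
    · refine hdSc.mono (Set.preimage_mono ?_)
      rw [hFeq]
      exact Set.compl_subset_compl.2 (Set.subset_iUnion F n)
  have hne : Nonempty ↥X := ⟨⟨f₀, hf₀X⟩⟩
  obtain ⟨y, hy⟩ := (dense_iInter_of_isOpen hVo hVd).nonempty
  rw [Set.mem_iInter] at hy
  have hyS : (y : ℕ → ℕ) ∈ S := by
    rw [hUeq, Set.mem_iInter]
    exact fun n => hy (Sum.inl n)
  have hySc : (y : ℕ → ℕ) ∉ S := by
    rw [hFeq, Set.mem_iUnion]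
    rintro ⟨n, hn⟩
    exact hy (Sum.inr n) hn
  exact hySc hyS

theorem stmt11 (S : Set (ℕ → ℕ)) :
    IsDelta02 S ↔ ∃ T : Set (ℕ → ℕ), S = T \ ext (kernel T) := by
  constructor
  · intro h
    refine ⟨S, ?_⟩
    have he := delta02_kernel_inter_empty h
    ext f
    constructor
    · intro hf
      refine ⟨hf, fun hc => ?_⟩
      have : f ∈ S ∩ ext (kernel S) := ⟨hf, hc⟩
      rw [he] at this
      exact this
    · exact fun hf => hf.1
  · rintro ⟨T, rfl⟩
    exact guessable_isDelta02 (guessable_diff T)
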